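/- Suppose ν is a probability measure on a measurable space and Q_1, Q_2, R_1, R_2 are countable measurable partitions of it, with 0 < ε_1, ε_2 < 1. If R_1 ⊥_ν^{ε_1} Q_1, and R_1 = Q_2 ∨ R_2 (i.e., R_1 is the common refinement of Q_2 and R_2, consisting of the intersections Q ∩ R for Q ∈ Q_2 and R ∈ R_2) where R_2 ⊥_ν^{ε_2} Q_2, then R_2 ⊥_ν^{2√ε_1 + 2√ε_2} (Q_1 ∨ Q_2). -/

import Mathlib

open MeasureTheory
open scoped ENNReal

namespace Paper

/-- `P` is a countable measurable partition (indexed by `ι`) of the space `Ω`. -/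
def IsPartition {Ω ι : Type*} [MeasurableSpace Ω] (P : ι → Set Ω) : Prop :=
  (∀ i, MeasurableSet (P i)) ∧ Pairwise (Function.onFun Disjoint P) ∧
    (⋃ i, P i) = Set.univ

/-- The partition `R` is `ε`-independent of the partition `Q` with respect to `ν`:
for a collection of atoms `Q` of total `ν`-measure at least `1 − ε`,
`Σ_R |ν(R|Q) − ν(R)| ≤ ε`. -/
def EpsIndep {Ω ι κ : Type*} [MeasurableSpace Ω] (ν : Measure Ω)
    (R : κ → Set Ω) (Q : ι → Set Ω) (ε : ℝ) : Prop :=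
  ∃ G : Set ι, 1 - ε ≤ (ν (⋃ i ∈ G, Q i)).toReal ∧
    ∀ i ∈ G, (∑' j : κ,
      |(ν (R j ∩ Q i)).toReal / (ν (Q i)).toReal - (ν (R j)).toReal|) ≤ ε

variable {Ω : Type*} [MeasurableSpace Ω]

lemma IsPartition.iUnion_inter {κ : Type*} {P : κ → Set Ω} (hP : IsPartition P) (S : Set Ω) :
    (⋃ j, P j ∩ S) = S := by
  rw [← Set.iUnion_inter, hP.2.2, Set.univ_inter]

lemma IsPartition.measure_eq {κ : Type*} [Countable κ] {P : κ → Set Ω} (hP : IsPartition P)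
    (ν : Measure Ω) {S : Set Ω} (hS : MeasurableSet S) :
    ν S = ∑' j, ν (P j ∩ S) := by
  conv_lhs => rw [← hP.iUnion_inter S]
  exact measure_iUnion
    (fun a b hab => (hP.2.1 hab).mono Set.inter_subset_left Set.inter_subset_left)
    (fun j => (hP.1 j).inter hS)

lemma IsPartition.tsum_toReal {κ : Type*} [Countable κ] {P : κ → Set Ω} (hP : IsPartition P)
    (ν : Measure Ω) [IsFiniteMeasure ν] {S : Set Ω} (hS : MeasurableSet S) :
    ∑' j, (ν (P j ∩ S)).toReal = (ν S).toReal := by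
  rw [hP.measure_eq ν hS, ENNReal.tsum_toReal_eq fun j => measure_ne_top ν _]

lemma IsPartition.summable {κ : Type*} [Countable κ] {P : κ → Set Ω} (hP : IsPartition P)
    (ν : Measure Ω) [IsFiniteMeasure ν] {S : Set Ω} (hS : MeasurableSet S) :
    Summable fun j => (ν (P j ∩ S)).toReal := by
  apply ENNReal.summable_toReal
  rw [← hP.measure_eq ν hS]; exact measure_ne_top ν S

lemma IsPartition.tsum_toReal_univ {κ : Type*} [Countable κ] {P : κ → Set Ω} (hP : IsPartition P)
    (ν : Measure Ω) [IsProbabilityMeasure ν] :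
    ∑' j, (ν (P j)).toReal = 1 := by
  have := hP.tsum_toReal ν (S := Set.univ) MeasurableSet.univ
  simpa using this

lemma IsPartition.summable_univ {κ : Type*} [Countable κ] {P : κ → Set Ω} (hP : IsPartition P)
    (ν : Measure Ω) [IsFiniteMeasure ν] :
    Summable fun j => (ν (P j)).toReal := by
  have := hP.summable ν (S := Set.univ) MeasurableSet.univ
  simpa using this

lemma IsPartition.prod {κ₁ κ₂ : Type*} {P : κ₁ → Set Ω} {Q : κ₂ → Set Ω}
    (hP : IsPartition P) (hQ : IsPartition Q) :
    IsPartition (fun p : κ₁ × κ₂ => P p.1 ∩ Q p.2) := by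
  refine ⟨fun p => (hP.1 p.1).inter (hQ.1 p.2), ?_, ?_⟩
  · intro p q hpq
    by_cases h : p.1 = q.1
    · have h2 : p.2 ≠ q.2 := fun h2 => hpq (Prod.ext h h2)
      exact (hQ.2.1 h2).mono Set.inter_subset_right Set.inter_subset_right
    · exact (hP.2.1 h).mono Set.inter_subset_left Set.inter_subset_left
  · rw [Set.eq_univ_iff_forall]
    intro x
    have h1 : x ∈ ⋃ i, P i := hP.2.2 ▸ Set.mem_univ x
    have h2 : x ∈ ⋃ i, Q i := hQ.2.2 ▸ Set.mem_univ x
    obtain ⟨i, hi⟩ := Set.mem_iUnion.mp h1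
    obtain ⟨k, hk⟩ := Set.mem_iUnion.mp h2
    exact Set.mem_iUnion.mpr ⟨(i, k), hi, hk⟩

lemma IsPartition.one_le_add {κ : Type*} [Countable κ] {P : κ → Set Ω} (hP : IsPartition P)
    (ν : Measure Ω) [IsProbabilityMeasure ν] (S : Set κ) :
    1 ≤ (ν (⋃ i ∈ S, P i)).toReal + (ν (⋃ i ∈ Sᶜ, P i)).toReal := by
  have hu : (⋃ i ∈ S, P i) ∪ (⋃ i ∈ Sᶜ, P i) = Set.univ := by
    rw [Set.eq_univ_iff_forall]
    intro x
    have h1 : x ∈ ⋃ i, P i := hP.2.2 ▸ Set.mem_univ x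
    obtain ⟨i, hi⟩ := Set.mem_iUnion.mp h1
    by_cases h : i ∈ S
    · exact Or.inl (Set.mem_biUnion h hi)
    · exact Or.inr (Set.mem_biUnion h hi)
  have hle : (1 : ℝ≥0∞) ≤ ν (⋃ i ∈ S, P i) + ν (⋃ i ∈ Sᶜ, P i) := by
    calc (1 : ℝ≥0∞) = ν Set.univ := (measure_univ (μ := ν)).symm
    _ = ν ((⋃ i ∈ S, P i) ∪ (⋃ i ∈ Sᶜ, P i)) := by rw [hu]
    _ ≤ _ := measure_union_le _ _
  have := ENNReal.toReal_mono
    (by exact ENNReal.add_ne_top.2 ⟨measure_ne_top ν _, measure_ne_top ν _⟩) hle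
  rwa [ENNReal.toReal_one, ENNReal.toReal_add (measure_ne_top ν _) (measure_ne_top ν _)] at this

lemma IsPartition.compl_le {κ : Type*} [Countable κ] {P : κ → Set Ω} (hP : IsPartition P)
    (ν : Measure Ω) [IsProbabilityMeasure ν] {S : Set κ} {ε : ℝ}
    (h : 1 - ε ≤ (ν (⋃ i ∈ S, P i)).toReal) :
    (ν (⋃ i ∈ Sᶜ, P i)).toReal ≤ ε := by
  have hd : Disjoint (⋃ i ∈ S, P i) (⋃ i ∈ Sᶜ, P i) := by
    rw [Set.disjoint_left]
    intro x hx hx'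
    obtain ⟨i, hiS, hi⟩ := Set.mem_iUnion₂.mp hx
    obtain ⟨j, hjS, hj⟩ := Set.mem_iUnion₂.mp hx'
    have hij : i ≠ j := fun h => hjS (h ▸ hiS)
    exact Set.disjoint_left.mp (hP.2.1 hij) hi hj
  have hmB : MeasurableSet (⋃ i ∈ Sᶜ, P i) :=
    MeasurableSet.biUnion (Set.to_countable _) (fun i _ => hP.1 i)
  have hle : ν (⋃ i ∈ S, P i) + ν (⋃ i ∈ Sᶜ, P i) ≤ 1 := by
    rw [← measure_union hd hmB]
    exact (measure_mono (Set.subset_univ _)).trans_eq measure_univ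
  have := ENNReal.toReal_mono (by simp) hle
  rw [ENNReal.toReal_one, ENNReal.toReal_add (measure_ne_top ν _) (measure_ne_top ν _)] at this
  linarith

lemma abs_tsum_le {κ : Type*} {f : κ → ℝ} (h : Summable fun j => |f j|) :
    |∑' j, f j| ≤ ∑' j, |f j| := by
  simpa [Real.norm_eq_abs] using norm_tsum_le_tsum_norm (f := f) (by simpa [Real.norm_eq_abs] using h)

end Paper

set_option linter.unusedSectionVars false
namespace Aux7

open MeasureTheory Paper
open scoped ENNReal

variable {Ω : Type*} [MeasurableSpace Ω] {ι₁ ι₂ ι₃ : Type*}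

/-- `a i k = Σ_j |ν(Q₂ k ∩ R₂ j | Q₁ i) − ν(Q₂ k ∩ R₂ j)|`. -/
noncomputable def auxA (ν : Measure Ω) (Q₁ : ι₁ → Set Ω) (Q₂ : ι₂ → Set Ω) (R₂ : ι₃ → Set Ω)
    (i : ι₁) (k : ι₂) : ℝ :=
  ∑' j, |(ν ((Q₂ k ∩ R₂ j) ∩ Q₁ i)).toReal / (ν (Q₁ i)).toReal - (ν (Q₂ k ∩ R₂ j)).toReal|

variable {ν : Measure Ω} {Q₁ : ι₁ → Set Ω} {Q₂ : ι₂ → Set Ω} {R₂ : ι₃ → Set Ω}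

lemma auxA_nonneg (i : ι₁) (k : ι₂) : 0 ≤ auxA ν Q₁ Q₂ R₂ i k :=
  tsum_nonneg fun _ => abs_nonneg _

section basic

variable [Countable ι₁] [Countable ι₂] [Countable ι₃] [IsProbabilityMeasure ν]
variable (hQ₁ : IsPartition Q₁) (hQ₂ : IsPartition Q₂) (hR₂ : IsPartition R₂)
include hQ₁ hQ₂ hR₂

lemma summable_f (i : ι₁) :
    Summable (fun q : ι₂ × ι₃ =>
      |(ν ((Q₂ q.1 ∩ R₂ q.2) ∩ Q₁ i)).toReal / (ν (Q₁ i)).toReal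
        - (ν ((Q₂ q.1 ∩ R₂ q.2))).toReal|) := by
  have hdom : Summable (fun q : ι₂ × ι₃ =>
      (ν ((Q₂ q.1 ∩ R₂ q.2) ∩ Q₁ i)).toReal / (ν (Q₁ i)).toReal
        + (ν ((Q₂ q.1 ∩ R₂ q.2))).toReal) :=
    (((hQ₂.prod hR₂).summable ν (hQ₁.1 i)).div_const _).add ((hQ₂.prod hR₂).summable_univ ν)
  refine Summable.of_nonneg_of_le (fun q => abs_nonneg _) (fun q => ?_) hdom
  have h1 : (0:ℝ) ≤ (ν ((Q₂ q.1 ∩ R₂ q.2) ∩ Q₁ i)).toReal / (ν (Q₁ i)).toReal :=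
    div_nonneg ENNReal.toReal_nonneg ENNReal.toReal_nonneg
  calc |(ν ((Q₂ q.1 ∩ R₂ q.2) ∩ Q₁ i)).toReal / (ν (Q₁ i)).toReal
        - (ν ((Q₂ q.1 ∩ R₂ q.2))).toReal|
      ≤ |(ν ((Q₂ q.1 ∩ R₂ q.2) ∩ Q₁ i)).toReal / (ν (Q₁ i)).toReal|
        + |(ν ((Q₂ q.1 ∩ R₂ q.2))).toReal| := abs_sub _ _
    _ = _ := by rw [abs_of_nonneg h1, abs_of_nonneg ENNReal.toReal_nonneg]

lemma summable_fk (i : ι₁) (k : ι₂) :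
    Summable (fun j : ι₃ =>
      |(ν ((Q₂ k ∩ R₂ j) ∩ Q₁ i)).toReal / (ν (Q₁ i)).toReal - (ν ((Q₂ k ∩ R₂ j))).toReal|) :=
  (summable_f hQ₁ hQ₂ hR₂ i).prod_factor k

lemma tsum_auxA_le {i : ι₁} {ε₁ : ℝ}
    (h : (∑' q : ι₂ × ι₃,
      |(ν ((Q₂ q.1 ∩ R₂ q.2) ∩ Q₁ i)).toReal / (ν (Q₁ i)).toReal
        - (ν ((Q₂ q.1 ∩ R₂ q.2))).toReal|) ≤ ε₁) :
    (∑' k, auxA ν Q₁ Q₂ R₂ i k) ≤ ε₁ := by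
  have he := Summable.tsum_prod' (summable_f (ν := ν) hQ₁ hQ₂ hR₂ i)
    (fun k => (summable_f (ν := ν) hQ₁ hQ₂ hR₂ i).prod_factor k)
  exact le_of_eq_of_le he.symm h

lemma summable_n (i : ι₁) (k : ι₂) :
    Summable fun j => (ν ((Q₂ k ∩ R₂ j) ∩ Q₁ i)).toReal := by
  have hset : ∀ j, (Q₂ k ∩ R₂ j) ∩ Q₁ i = R₂ j ∩ (Q₂ k ∩ Q₁ i) := by
    intro j; ext x; simp only [Set.mem_inter_iff]; tauto
  exact (hR₂.summable ν ((hQ₂.1 k).inter (hQ₁.1 i))).congr fun j => by rw [hset j]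

lemma tsum_n (i : ι₁) (k : ι₂) :
    (∑' j, (ν ((Q₂ k ∩ R₂ j) ∩ Q₁ i)).toReal) = (ν (Q₂ k ∩ Q₁ i)).toReal := by
  have hset : ∀ j, (Q₂ k ∩ R₂ j) ∩ Q₁ i = R₂ j ∩ (Q₂ k ∩ Q₁ i) := by
    intro j; ext x; simp only [Set.mem_inter_iff]; tauto
  calc (∑' j, (ν ((Q₂ k ∩ R₂ j) ∩ Q₁ i)).toReal)
      = ∑' j, (ν (R₂ j ∩ (Q₂ k ∩ Q₁ i))).toReal := tsum_congr fun j => by rw [hset j]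
    _ = _ := hR₂.tsum_toReal ν ((hQ₂.1 k).inter (hQ₁.1 i))

lemma summable_y (k : ι₂) : Summable fun j => (ν (Q₂ k ∩ R₂ j)).toReal :=
  (hR₂.summable ν (hQ₂.1 k)).congr fun j => by rw [Set.inter_comm]

lemma tsum_y (k : ι₂) : (∑' j, (ν (Q₂ k ∩ R₂ j)).toReal) = (ν (Q₂ k)).toReal := by
  calc (∑' j, (ν (Q₂ k ∩ R₂ j)).toReal)
      = ∑' j, (ν (R₂ j ∩ Q₂ k)).toReal := tsum_congr fun j => by rw [Set.inter_comm]
    _ = _ := hR₂.tsum_toReal ν (hQ₂.1 k)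

lemma auxA_le (i : ι₁) (k : ι₂) :
    auxA ν Q₁ Q₂ R₂ i k
      ≤ (ν (Q₂ k ∩ Q₁ i)).toReal / (ν (Q₁ i)).toReal + (ν (Q₂ k)).toReal := by
  have hx : Summable fun j => (ν ((Q₂ k ∩ R₂ j) ∩ Q₁ i)).toReal / (ν (Q₁ i)).toReal :=
    (summable_n (ν := ν) hQ₁ hQ₂ hR₂ i k).div_const _
  have hy := summable_y (ν := ν) hQ₁ hQ₂ hR₂ k
  calc auxA ν Q₁ Q₂ R₂ i k
      ≤ ∑' j, ((ν ((Q₂ k ∩ R₂ j) ∩ Q₁ i)).toReal / (ν (Q₁ i)).toReal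
          + (ν (Q₂ k ∩ R₂ j)).toReal) := by
        refine Summable.tsum_le_tsum (fun j => ?_) (summable_fk (ν := ν) hQ₁ hQ₂ hR₂ i k) (hx.add hy)
        have h1 : (0:ℝ) ≤ (ν ((Q₂ k ∩ R₂ j) ∩ Q₁ i)).toReal / (ν (Q₁ i)).toReal :=
          div_nonneg ENNReal.toReal_nonneg ENNReal.toReal_nonneg
        calc |(ν ((Q₂ k ∩ R₂ j) ∩ Q₁ i)).toReal / (ν (Q₁ i)).toReal
              - (ν (Q₂ k ∩ R₂ j)).toReal|
            ≤ |(ν ((Q₂ k ∩ R₂ j) ∩ Q₁ i)).toReal / (ν (Q₁ i)).toReal|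
              + |(ν (Q₂ k ∩ R₂ j)).toReal| := abs_sub _ _
          _ = _ := by rw [abs_of_nonneg h1, abs_of_nonneg ENNReal.toReal_nonneg]
    _ = (∑' j, (ν ((Q₂ k ∩ R₂ j) ∩ Q₁ i)).toReal / (ν (Q₁ i)).toReal)
        + ∑' j, (ν (Q₂ k ∩ R₂ j)).toReal := Summable.tsum_add hx hy
    _ = _ := by rw [tsum_div_const, tsum_n hQ₁ hQ₂ hR₂ i k, tsum_y hQ₁ hQ₂ hR₂ k]

lemma abs_le_auxA (i : ι₁) (k : ι₂) :
    |(ν (Q₂ k)).toReal - (ν (Q₂ k ∩ Q₁ i)).toReal / (ν (Q₁ i)).toReal|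
      ≤ auxA ν Q₁ Q₂ R₂ i k := by
  have hx : Summable fun j => (ν ((Q₂ k ∩ R₂ j) ∩ Q₁ i)).toReal / (ν (Q₁ i)).toReal :=
    (summable_n (ν := ν) hQ₁ hQ₂ hR₂ i k).div_const _
  have hy := summable_y (ν := ν) hQ₁ hQ₂ hR₂ k
  have habs := summable_fk (ν := ν) hQ₁ hQ₂ hR₂ i k
  have h1 : |∑' j, ((ν ((Q₂ k ∩ R₂ j) ∩ Q₁ i)).toReal / (ν (Q₁ i)).toReal
      - (ν (Q₂ k ∩ R₂ j)).toReal)| ≤ auxA ν Q₁ Q₂ R₂ i k := Paper.abs_tsum_le habs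
  rw [Summable.tsum_sub hx hy, tsum_div_const, tsum_n hQ₁ hQ₂ hR₂ i k, tsum_y hQ₁ hQ₂ hR₂ k] at h1
  rwa [abs_sub_comm] at h1

lemma Qpos {k : ι₂} {ε₂ : ℝ} (hε₂' : ε₂ < 1)
    (hk2 : (∑' j, |(ν (R₂ j ∩ Q₂ k)).toReal / (ν (Q₂ k)).toReal - (ν (R₂ j)).toReal|) ≤ ε₂) :
    0 < (ν (Q₂ k)).toReal := by
  rcases (ENNReal.toReal_nonneg (a := ν (Q₂ k))).lt_or_eq with h | h
  · exact h
  · exfalso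
    have ht0 : (ν (Q₂ k)).toReal = 0 := h.symm
    have he : (∑' j, |(ν (R₂ j ∩ Q₂ k)).toReal / (ν (Q₂ k)).toReal - (ν (R₂ j)).toReal|)
        = ∑' j, (ν (R₂ j)).toReal := tsum_congr fun j => by
      rw [ht0, div_zero, zero_sub, abs_neg, abs_of_nonneg ENNReal.toReal_nonneg]
    rw [he, hR₂.tsum_toReal_univ ν] at hk2
    linarith

end basic

end Aux7

namespace Aux7

open MeasureTheory Paper
open scoped ENNReal

lemma abs_triple (A B C r : ℝ) : |A - r| ≤ |A - B| + |B - C| + |C - r| := by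
  have h1 := abs_sub_le A C r
  have h2 := abs_sub_le A B C
  linarith

lemma term_bound {n m₁ D y Qk r : ℝ} (hm₁ : 0 < m₁) (hP : 0 < D / m₁) (hy : 0 ≤ y) :
    |n / D - r| ≤ |n / m₁ - y| / (D / m₁) + y * |(D / m₁)⁻¹ - Qk⁻¹| + |y / Qk - r| := by
  have hD0 : 0 < D := by
    have := mul_pos hP hm₁
    rwa [div_mul_cancel₀ _ hm₁.ne'] at this
  have h1 : n / D = (n / m₁) / (D / m₁) := by
    rw [div_div_div_cancel_right₀]
    exact hm₁.ne'
  calc |n / D - r| = |(n / m₁) / (D / m₁) - r| := by rw [h1]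
    _ ≤ |(n / m₁) / (D / m₁) - y / (D / m₁)| + |y / (D / m₁) - y / Qk| + |y / Qk - r| :=
      abs_triple _ _ _ _
    _ = _ := by
      rw [div_sub_div_same, abs_div, abs_of_nonneg hP.le, div_eq_mul_inv y (D / m₁),
        div_eq_mul_inv y Qk, ← mul_sub, abs_mul, abs_of_nonneg hy]

lemma abstract_peratom {ι₃ : Type*} {n y r : ι₃ → ℝ} {m₁ D Qk s₁ ε₂ a : ℝ}
    (hm₁ : 0 < m₁) (hQk : 0 < Qk) (hP : 0 < D / m₁)
    (hy0 : ∀ j, 0 ≤ y j) (hr0 : ∀ j, 0 ≤ r j)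
    (hy : Summable y) (hr : Summable r)
    (habs : Summable fun j => |n j / m₁ - y j|)
    (ha : (∑' j, |n j / m₁ - y j|) = a)
    (hsy : (∑' j, y j) = Qk)
    (hF5 : |Qk - D / m₁| ≤ a)
    (hth : a ≤ s₁ * (D / m₁)) (hs₁ : 0 < s₁)
    (hk2 : (∑' j, |y j / Qk - r j|) ≤ ε₂) :
    (∑' j, |n j / D - r j|) ≤ s₁ + s₁ + ε₂ := by
  have hA : Summable fun j => |n j / m₁ - y j| / (D / m₁) := habs.div_const _
  have hB : Summable fun j => y j * |(D / m₁)⁻¹ - Qk⁻¹| := hy.mul_right _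
  have hC : Summable fun j => |y j / Qk - r j| := by
    refine Summable.of_nonneg_of_le (fun j => abs_nonneg _) (fun j => ?_)
      ((hy.div_const Qk).add hr)
    calc |y j / Qk - r j| ≤ |y j / Qk| + |r j| := abs_sub _ _
      _ = y j / Qk + r j := by
        rw [abs_of_nonneg (div_nonneg (hy0 j) hQk.le), abs_of_nonneg (hr0 j)]
  have hterm : ∀ j, |n j / D - r j|
      ≤ |n j / m₁ - y j| / (D / m₁) + y j * |(D / m₁)⁻¹ - Qk⁻¹| + |y j / Qk - r j| :=
    fun j => term_bound hm₁ hP (hy0 j)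
  have hT : Summable fun j => |n j / D - r j| :=
    Summable.of_nonneg_of_le (fun j => abs_nonneg _) hterm ((hA.add hB).add hC)
  have hD0 : 0 < D := by
    have := mul_pos hP hm₁
    rwa [div_mul_cancel₀ _ hm₁.ne'] at this
  have e1 : (∑' j, |n j / m₁ - y j| / (D / m₁)) ≤ s₁ := by
    rw [tsum_div_const, ha]
    exact (div_le_iff₀ hP).mpr hth
  have e2 : (∑' j, y j * |(D / m₁)⁻¹ - Qk⁻¹|) ≤ s₁ := by
    rw [tsum_mul_right, hsy]
    have key : Qk * |(D / m₁)⁻¹ - Qk⁻¹| = |Qk - D / m₁| / (D / m₁) := by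
      calc Qk * |(D / m₁)⁻¹ - Qk⁻¹| = |Qk * ((D / m₁)⁻¹ - Qk⁻¹)| := by
            rw [abs_mul, abs_of_nonneg hQk.le]
        _ = |(Qk - D / m₁) / (D / m₁)| := by
            congr 1
            field_simp
        _ = |Qk - D / m₁| / (D / m₁) := by rw [abs_div, abs_of_nonneg hP.le]
    rw [key]
    calc |Qk - D / m₁| / (D / m₁) ≤ a / (D / m₁) := by gcongr
      _ ≤ s₁ := (div_le_iff₀ hP).mpr hth
  calc (∑' j, |n j / D - r j|)
      ≤ ∑' j, (|n j / m₁ - y j| / (D / m₁) + y j * |(D / m₁)⁻¹ - Qk⁻¹|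
          + |y j / Qk - r j|) := Summable.tsum_le_tsum hterm hT ((hA.add hB).add hC)
    _ = (∑' j, |n j / m₁ - y j| / (D / m₁)) + (∑' j, y j * |(D / m₁)⁻¹ - Qk⁻¹|)
        + ∑' j, |y j / Qk - r j| := by rw [Summable.tsum_add (hA.add hB) hC, Summable.tsum_add hA hB]
    _ ≤ s₁ + s₁ + ε₂ := add_le_add (add_le_add e1 e2) hk2

section measure

set_option linter.unusedSectionVars false

variable {Ω : Type*} [MeasurableSpace Ω] {ι₁ ι₂ ι₃ : Type*}
variable {ν : Measure Ω} {Q₁ : ι₁ → Set Ω} {Q₂ : ι₂ → Set Ω} {R₂ : ι₃ → Set Ω}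
variable [Countable ι₁] [Countable ι₂] [Countable ι₃] [IsProbabilityMeasure ν]
variable (hQ₁ : IsPartition Q₁) (hQ₂ : IsPartition Q₂) (hR₂ : IsPartition R₂)
include hQ₁ hQ₂ hR₂

lemma peratom {i : ι₁} {k : ι₂} {ε₂ s₁ : ℝ} (hs₁ : 0 < s₁) (hε₂' : ε₂ < 1)
    (hm₁ : 0 < (ν (Q₁ i)).toReal)
    (hk2 : (∑' j, |(ν (R₂ j ∩ Q₂ k)).toReal / (ν (Q₂ k)).toReal - (ν (R₂ j)).toReal|) ≤ ε₂)
    (hth : auxA ν Q₁ Q₂ R₂ i k ≤ s₁ * ((ν (Q₁ i ∩ Q₂ k)).toReal / (ν (Q₁ i)).toReal)) :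
    (∑' j, |(ν (R₂ j ∩ (Q₁ i ∩ Q₂ k))).toReal / (ν (Q₁ i ∩ Q₂ k)).toReal
      - (ν (R₂ j)).toReal|) ≤ s₁ + s₁ + ε₂ := by
  have hQk : 0 < (ν (Q₂ k)).toReal := Qpos (ν := ν) hQ₁ hQ₂ hR₂ hε₂' hk2
  have hDeq : (ν (Q₂ k ∩ Q₁ i)).toReal = (ν (Q₁ i ∩ Q₂ k)).toReal := by rw [Set.inter_comm]
  have hF5 : |(ν (Q₂ k)).toReal - (ν (Q₁ i ∩ Q₂ k)).toReal / (ν (Q₁ i)).toReal|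
      ≤ auxA ν Q₁ Q₂ R₂ i k := by
    have h := abs_le_auxA (ν := ν) hQ₁ hQ₂ hR₂ i k
    rwa [hDeq] at h
  have hP : 0 < (ν (Q₁ i ∩ Q₂ k)).toReal / (ν (Q₁ i)).toReal := by
    rcases (div_nonneg ENNReal.toReal_nonneg ENNReal.toReal_nonneg :
        (0:ℝ) ≤ (ν (Q₁ i ∩ Q₂ k)).toReal / (ν (Q₁ i)).toReal).lt_or_eq with h | h
    · exact h
    · exfalso
      have ha0 : auxA ν Q₁ Q₂ R₂ i k ≤ 0 := by rw [← h] at hth; simpa using hth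
      rw [← h, sub_zero, abs_of_nonneg ENNReal.toReal_nonneg] at hF5
      linarith
  have hre : ∀ j, (ν (R₂ j ∩ (Q₁ i ∩ Q₂ k))) = ν ((Q₂ k ∩ R₂ j) ∩ Q₁ i) := fun j => by
    congr 1; ext x; simp only [Set.mem_inter_iff]; tauto
  have htar : (∑' j, |(ν (R₂ j ∩ (Q₁ i ∩ Q₂ k))).toReal / (ν (Q₁ i ∩ Q₂ k)).toReal
      - (ν (R₂ j)).toReal|)
      = ∑' j, |(ν ((Q₂ k ∩ R₂ j) ∩ Q₁ i)).toReal / (ν (Q₁ i ∩ Q₂ k)).toReal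
      - (ν (R₂ j)).toReal| := tsum_congr fun j => by rw [hre j]
  have hk2' : (∑' j, |(ν (Q₂ k ∩ R₂ j)).toReal / (ν (Q₂ k)).toReal
      - (ν (R₂ j)).toReal|) ≤ ε₂ := by
    refine le_of_eq_of_le (tsum_congr fun j => ?_) hk2
    rw [Set.inter_comm]
  rw [htar]
  exact abstract_peratom (n := fun j => (ν ((Q₂ k ∩ R₂ j) ∩ Q₁ i)).toReal)
    (y := fun j => (ν (Q₂ k ∩ R₂ j)).toReal) (r := fun j => (ν (R₂ j)).toReal)
    hm₁ hQk hP (fun j => ENNReal.toReal_nonneg) (fun j => ENNReal.toReal_nonneg)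
    (summable_y (ν := ν) hQ₁ hQ₂ hR₂ k) (hR₂.summable_univ ν)
    (summable_fk (ν := ν) hQ₁ hQ₂ hR₂ i k) rfl (tsum_y (ν := ν) hQ₁ hQ₂ hR₂ k)
    hF5 hth hs₁ hk2'

end measure

end Aux7

namespace Aux7

open MeasureTheory Paper
open scoped ENNReal

section mass

set_option linter.unusedSectionVars false

variable {Ω : Type*} [MeasurableSpace Ω] {ι₁ ι₂ ι₃ : Type*}
variable {ν : Measure Ω} {Q₁ : ι₁ → Set Ω} {Q₂ : ι₂ → Set Ω} {R₂ : ι₃ → Set Ω}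
variable [Countable ι₁] [Countable ι₂] [Countable ι₃] [IsProbabilityMeasure ν]
variable (hQ₁ : IsPartition Q₁) (hQ₂ : IsPartition Q₂) (hR₂ : IsPartition R₂)
include hQ₁ hQ₂ hR₂

lemma massU3 {ε₁ : ℝ} (hε₁ : 0 < ε₁) (G₁ : Set ι₁)
    (hG₁ : ∀ i ∈ G₁, (∑' k, auxA ν Q₁ Q₂ R₂ i k) ≤ ε₁) :
    (ν (⋃ p ∈ {p : ι₁ × ι₂ | p.1 ∈ G₁ ∧
        Real.sqrt ε₁ * ((ν (Q₁ p.1 ∩ Q₂ p.2)).toReal / (ν (Q₁ p.1)).toReal)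
          < auxA ν Q₁ Q₂ R₂ p.1 p.2}, Q₁ p.1 ∩ Q₂ p.2)).toReal ≤ Real.sqrt ε₁ := by
  classical
  have hs₁ : 0 < Real.sqrt ε₁ := Real.sqrt_pos.mpr hε₁
  set B := {p : ι₁ × ι₂ | p.1 ∈ G₁ ∧
      Real.sqrt ε₁ * ((ν (Q₁ p.1 ∩ Q₂ p.2)).toReal / (ν (Q₁ p.1)).toReal)
        < auxA ν Q₁ Q₂ R₂ p.1 p.2} with hBdef
  set c : ι₁ × ι₂ → ℝ := fun p => if p.1 ∈ G₁ then
      (ν (Q₁ p.1)).toReal * auxA ν Q₁ Q₂ R₂ p.1 p.2 / Real.sqrt ε₁ else 0 with hcdef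
  have hc0 : ∀ p, 0 ≤ c p := by
    intro p
    simp only [hcdef]
    split_ifs
    · exact div_nonneg (mul_nonneg ENNReal.toReal_nonneg (auxA_nonneg _ _)) hs₁.le
    · exact le_refl 0
  have hcsum : Summable c := by
    refine Summable.of_nonneg_of_le hc0 (fun p => ?_)
      ((((hQ₁.prod hQ₂).summable_univ ν).add
        (Summable.mul_of_nonneg (hQ₁.summable_univ ν) (hQ₂.summable_univ ν)
          (fun i => ENNReal.toReal_nonneg) (fun k => ENNReal.toReal_nonneg))).div_const
            (Real.sqrt ε₁))
    simp only [hcdef]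
    split_ifs
    · have haux := auxA_le (ν := ν) hQ₁ hQ₂ hR₂ p.1 p.2
      have h3 : (ν (Q₁ p.1)).toReal *
          ((ν (Q₂ p.2 ∩ Q₁ p.1)).toReal / (ν (Q₁ p.1)).toReal)
          ≤ (ν (Q₂ p.2 ∩ Q₁ p.1)).toReal := by
        rcases eq_or_lt_of_le (ENNReal.toReal_nonneg (a := ν (Q₁ p.1))) with h | h
        · rw [← h, zero_mul]; exact ENNReal.toReal_nonneg
        · rw [mul_comm, div_mul_cancel₀ _ h.ne']
      have h2 : (ν (Q₁ p.1)).toReal * auxA ν Q₁ Q₂ R₂ p.1 p.2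
          ≤ (ν (Q₁ p.1 ∩ Q₂ p.2)).toReal
            + (ν (Q₁ p.1)).toReal * (ν (Q₂ p.2)).toReal := by
        calc (ν (Q₁ p.1)).toReal * auxA ν Q₁ Q₂ R₂ p.1 p.2
            ≤ (ν (Q₁ p.1)).toReal *
              ((ν (Q₂ p.2 ∩ Q₁ p.1)).toReal / (ν (Q₁ p.1)).toReal
                + (ν (Q₂ p.2)).toReal) :=
              mul_le_mul_of_nonneg_left haux ENNReal.toReal_nonneg
          _ = (ν (Q₁ p.1)).toReal *
              ((ν (Q₂ p.2 ∩ Q₁ p.1)).toReal / (ν (Q₁ p.1)).toReal)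
              + (ν (Q₁ p.1)).toReal * (ν (Q₂ p.2)).toReal := mul_add _ _ _
          _ ≤ (ν (Q₂ p.2 ∩ Q₁ p.1)).toReal
              + (ν (Q₁ p.1)).toReal * (ν (Q₂ p.2)).toReal := add_le_add_left h3 _
          _ = _ := by rw [Set.inter_comm]
      gcongr
    · positivity
  have hkey : ∀ p : ι₁ × ι₂, p ∈ B → (ν (Q₁ p.1 ∩ Q₂ p.2)).toReal ≤ c p := by
    intro p hp
    obtain ⟨h1, hlt⟩ := hp
    simp only [hcdef]
    rw [if_pos h1]
    rcases eq_or_lt_of_le (ENNReal.toReal_nonneg (a := ν (Q₁ p.1))) with h | h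
    · have hD0 : (ν (Q₁ p.1 ∩ Q₂ p.2)).toReal ≤ (ν (Q₁ p.1)).toReal :=
        ENNReal.toReal_mono (measure_ne_top ν _) (measure_mono Set.inter_subset_left)
      rw [← h] at hD0
      rw [← h, zero_mul, zero_div]
      exact hD0
    · have h4 : (ν (Q₁ p.1 ∩ Q₂ p.2)).toReal / (ν (Q₁ p.1)).toReal
          < auxA ν Q₁ Q₂ R₂ p.1 p.2 / Real.sqrt ε₁ := by
        rw [lt_div_iff₀ hs₁, mul_comm]
        exact hlt
      have h5 : (ν (Q₁ p.1 ∩ Q₂ p.2)).toReal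
          < auxA ν Q₁ Q₂ R₂ p.1 p.2 / Real.sqrt ε₁ * (ν (Q₁ p.1)).toReal :=
        (div_lt_iff₀ h).mp h4
      calc (ν (Q₁ p.1 ∩ Q₂ p.2)).toReal
          ≤ auxA ν Q₁ Q₂ R₂ p.1 p.2 / Real.sqrt ε₁ * (ν (Q₁ p.1)).toReal := h5.le
        _ = (ν (Q₁ p.1)).toReal * auxA ν Q₁ Q₂ R₂ p.1 p.2 / Real.sqrt ε₁ := by ring
  have hmeas1 : ν (⋃ p ∈ B, Q₁ p.1 ∩ Q₂ p.2)
      ≤ ∑' p : B, ν (Q₁ (p : ι₁ × ι₂).1 ∩ Q₂ (p : ι₁ × ι₂).2) :=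
    measure_biUnion_le ν (Set.to_countable B) _
  have htot : (∑' p : ι₁ × ι₂, ν (Q₁ p.1 ∩ Q₂ p.2)) = 1 := by
    have h := (hQ₁.prod hQ₂).measure_eq ν (S := Set.univ) MeasurableSet.univ
    simp only [Set.inter_univ] at h
    rw [measure_univ] at h
    exact h.symm
  have hsub : (∑' p : B, ν (Q₁ (p : ι₁ × ι₂).1 ∩ Q₂ (p : ι₁ × ι₂).2)) ≤ 1 := by
    rw [← htot]
    exact ENNReal.tsum_comp_le_tsum_of_injective Subtype.val_injective _
  have hne : (∑' p : B, ν (Q₁ (p : ι₁ × ι₂).1 ∩ Q₂ (p : ι₁ × ι₂).2)) ≠ ⊤ :=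
    ne_top_of_le_ne_top (by simp) hsub
  have hinner : ∀ i, (∑' k, c (i, k)) ≤ (ν (Q₁ i)).toReal * Real.sqrt ε₁ := by
    intro i
    by_cases hi : i ∈ G₁
    · calc (∑' k, c (i, k))
          = ∑' k, (ν (Q₁ i)).toReal * auxA ν Q₁ Q₂ R₂ i k / Real.sqrt ε₁ :=
            tsum_congr fun k => by simp only [hcdef]; rw [if_pos hi]
        _ = (ν (Q₁ i)).toReal * (∑' k, auxA ν Q₁ Q₂ R₂ i k) / Real.sqrt ε₁ := by
            rw [tsum_div_const, tsum_mul_left]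
        _ ≤ (ν (Q₁ i)).toReal * ε₁ / Real.sqrt ε₁ := by
            gcongr
            exact hG₁ i hi
        _ = (ν (Q₁ i)).toReal * Real.sqrt ε₁ := by
            rw [mul_div_assoc, Real.div_sqrt]
    · have hz : ∀ k : ι₂, c (i, k) = 0 := fun k => by simp only [hcdef]; rw [if_neg hi]
      calc (∑' k, c (i, k)) = ∑' k : ι₂, (0:ℝ) := tsum_congr hz
        _ = 0 := tsum_zero
        _ ≤ _ := mul_nonneg ENNReal.toReal_nonneg (Real.sqrt_nonneg _)
  have hinnersumm : Summable fun i => ∑' k, c (i, k) :=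
    Summable.of_nonneg_of_le (fun i => tsum_nonneg fun k => hc0 _) hinner
      ((hQ₁.summable_univ ν).mul_right _)
  calc (ν (⋃ p ∈ B, Q₁ p.1 ∩ Q₂ p.2)).toReal
      ≤ (∑' p : B, ν (Q₁ (p : ι₁ × ι₂).1 ∩ Q₂ (p : ι₁ × ι₂).2)).toReal :=
        ENNReal.toReal_mono hne hmeas1
    _ = ∑' p : B, (ν (Q₁ (p : ι₁ × ι₂).1 ∩ Q₂ (p : ι₁ × ι₂).2)).toReal :=
        ENNReal.tsum_toReal_eq fun p => measure_ne_top ν _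
    _ ≤ ∑' p : B, c p := Summable.tsum_le_tsum (fun p => hkey p p.2)
        (ENNReal.summable_toReal hne) (hcsum.subtype B)
    _ ≤ ∑' p : ι₁ × ι₂, c p := Summable.tsum_le_tsum_of_inj Subtype.val Subtype.val_injective
        (fun q _ => hc0 q) (fun p => le_refl (c p.val)) (hcsum.subtype B) hcsum
    _ = ∑' i, ∑' k, c (i, k) := Summable.tsum_prod' hcsum fun i => hcsum.prod_factor i
    _ ≤ ∑' i, (ν (Q₁ i)).toReal * Real.sqrt ε₁ :=
        Summable.tsum_le_tsum hinner hinnersumm ((hQ₁.summable_univ ν).mul_right _)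
    _ = Real.sqrt ε₁ := by rw [tsum_mul_right, hQ₁.tsum_toReal_univ ν, one_mul]

end mass

end Aux7


open Paper
open Aux7

/-- **Inductive step.** If `ν` is a probability measure, `Q₁, Q₂, R₂` are
countable measurable partitions with `0 < ε₁, ε₂ < 1`, the join `Q₂ ∨ R₂` is
`ε₁`-independent of `Q₁`, and `R₂` is `ε₂`-independent of `Q₂`, then `R₂` is
`(2√ε₁ + 2√ε₂)`-independent of `Q₁ ∨ Q₂`. -/
theorem statement7 {Ω : Type*} [MeasurableSpace Ω]
    (ν : Measure Ω) [IsProbabilityMeasure ν]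
    {ι₁ ι₂ ι₃ : Type*} [Countable ι₁] [Countable ι₂] [Countable ι₃]
    (Q₁ : ι₁ → Set Ω) (Q₂ : ι₂ → Set Ω) (R₂ : ι₃ → Set Ω)
    (hQ₁ : IsPartition Q₁) (hQ₂ : IsPartition Q₂) (hR₂ : IsPartition R₂)
    (ε₁ ε₂ : ℝ) (hε₁ : 0 < ε₁) (hε₁' : ε₁ < 1) (hε₂ : 0 < ε₂) (hε₂' : ε₂ < 1)
    (h₁ : EpsIndep ν (fun p : ι₂ × ι₃ => Q₂ p.1 ∩ R₂ p.2) Q₁ ε₁)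
    (h₂ : EpsIndep ν R₂ Q₂ ε₂) :
    EpsIndep ν R₂ (fun p : ι₁ × ι₂ => Q₁ p.1 ∩ Q₂ p.2)
      (2 * Real.sqrt ε₁ + 2 * Real.sqrt ε₂) := by
  classical
  obtain ⟨G₁, hG₁m, hG₁⟩ := h₁
  obtain ⟨G₂, hG₂m, hG₂⟩ := h₂
  have hs₁ : 0 < Real.sqrt ε₁ := Real.sqrt_pos.mpr hε₁
  have hs₂ : 0 < Real.sqrt ε₂ := Real.sqrt_pos.mpr hε₂
  have hε₁s : ε₁ ≤ Real.sqrt ε₁ := by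
    nlinarith [Real.sq_sqrt hε₁.le, Real.sqrt_le_one.mpr hε₁'.le, Real.sqrt_nonneg ε₁]
  have hε₂s : ε₂ ≤ Real.sqrt ε₂ := by
    nlinarith [Real.sq_sqrt hε₂.le, Real.sqrt_le_one.mpr hε₂'.le, Real.sqrt_nonneg ε₂]
  have hG₁' : ∀ i ∈ G₁, (∑' k, auxA ν Q₁ Q₂ R₂ i k) ≤ ε₁ := fun i hi =>
    tsum_auxA_le (ν := ν) hQ₁ hQ₂ hR₂ (hG₁ i hi)
  refine ⟨{p : ι₁ × ι₂ | p.1 ∈ G₁ ∧ 0 < (ν (Q₁ p.1)).toReal ∧ p.2 ∈ G₂ ∧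
      auxA ν Q₁ Q₂ R₂ p.1 p.2
        ≤ Real.sqrt ε₁ * ((ν (Q₁ p.1 ∩ Q₂ p.2)).toReal / (ν (Q₁ p.1)).toReal)}, ?_, ?_⟩
  · -- mass estimate
    set GG := {p : ι₁ × ι₂ | p.1 ∈ G₁ ∧ 0 < (ν (Q₁ p.1)).toReal ∧ p.2 ∈ G₂ ∧
      auxA ν Q₁ Q₂ R₂ p.1 p.2
        ≤ Real.sqrt ε₁ * ((ν (Q₁ p.1 ∩ Q₂ p.2)).toReal / (ν (Q₁ p.1)).toReal)} with hGGdef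
    set B3 := {p : ι₁ × ι₂ | p.1 ∈ G₁ ∧
      Real.sqrt ε₁ * ((ν (Q₁ p.1 ∩ Q₂ p.2)).toReal / (ν (Q₁ p.1)).toReal)
        < auxA ν Q₁ Q₂ R₂ p.1 p.2} with hB3def
    have hcover : (⋃ p ∈ GGᶜ, Q₁ p.1 ∩ Q₂ p.2)
        ⊆ (⋃ i ∈ G₁ᶜ, Q₁ i) ∪ ((⋃ i ∈ {i : ι₁ | (ν (Q₁ i)).toReal = 0}, Q₁ i)
          ∪ ((⋃ k ∈ G₂ᶜ, Q₂ k) ∪ (⋃ p ∈ B3, Q₁ p.1 ∩ Q₂ p.2))) := by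
      intro x hx
      obtain ⟨p, hpB, hpx⟩ := Set.mem_iUnion₂.mp hx
      by_cases h1 : p.1 ∈ G₁
      · by_cases h0 : 0 < (ν (Q₁ p.1)).toReal
        · by_cases h2 : p.2 ∈ G₂
          · have h3 : ¬ (auxA ν Q₁ Q₂ R₂ p.1 p.2
                ≤ Real.sqrt ε₁ * ((ν (Q₁ p.1 ∩ Q₂ p.2)).toReal / (ν (Q₁ p.1)).toReal)) :=
              fun hcon => hpB ⟨h1, h0, h2, hcon⟩
            exact Or.inr (Or.inr (Or.inr
              (Set.mem_biUnion (show p ∈ B3 from ⟨h1, not_le.mp h3⟩) hpx)))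
          · exact Or.inr (Or.inr (Or.inl (Set.mem_biUnion h2 hpx.2)))
        · have h0' : (ν (Q₁ p.1)).toReal = 0 :=
            le_antisymm (not_lt.mp h0) ENNReal.toReal_nonneg
          exact Or.inr (Or.inl (Set.mem_biUnion (show p.1 ∈ {i : ι₁ |
            (ν (Q₁ i)).toReal = 0} from h0') hpx.1))
      · exact Or.inl (Set.mem_biUnion h1 hpx.1)
    have hstep : ν (⋃ p ∈ GGᶜ, Q₁ p.1 ∩ Q₂ p.2)
        ≤ ν (⋃ i ∈ G₁ᶜ, Q₁ i) + (ν (⋃ i ∈ {i : ι₁ | (ν (Q₁ i)).toReal = 0}, Q₁ i)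
          + (ν (⋃ k ∈ G₂ᶜ, Q₂ k) + ν (⋃ p ∈ B3, Q₁ p.1 ∩ Q₂ p.2))) := by
      refine (measure_mono hcover).trans ?_
      refine (measure_union_le _ _).trans ?_
      gcongr
      refine (measure_union_le _ _).trans ?_
      gcongr
      exact measure_union_le _ _
    have hU0 : ν (⋃ i ∈ {i : ι₁ | (ν (Q₁ i)).toReal = 0}, Q₁ i) = 0 := by
      refine (measure_biUnion_null_iff (Set.to_countable _)).mpr ?_
      intro i hi
      exact ((ENNReal.toReal_eq_zero_iff _).mp hi).resolve_right (measure_ne_top ν _)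
    have hU1 : (ν (⋃ i ∈ G₁ᶜ, Q₁ i)).toReal ≤ ε₁ := hQ₁.compl_le ν hG₁m
    have hU2 : (ν (⋃ k ∈ G₂ᶜ, Q₂ k)).toReal ≤ ε₂ := hQ₂.compl_le ν hG₂m
    have hU3 : (ν (⋃ p ∈ B3, Q₁ p.1 ∩ Q₂ p.2)).toReal ≤ Real.sqrt ε₁ :=
      massU3 (ν := ν) hQ₁ hQ₂ hR₂ hε₁ G₁ hG₁'
    have hbadtR : (ν (⋃ p ∈ GGᶜ, Q₁ p.1 ∩ Q₂ p.2)).toReal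
        ≤ (ν (⋃ i ∈ G₁ᶜ, Q₁ i)).toReal
          + ((ν (⋃ i ∈ {i : ι₁ | (ν (Q₁ i)).toReal = 0}, Q₁ i)).toReal
          + ((ν (⋃ k ∈ G₂ᶜ, Q₂ k)).toReal
            + (ν (⋃ p ∈ B3, Q₁ p.1 ∩ Q₂ p.2)).toReal)) := by
      have hne : ν (⋃ i ∈ G₁ᶜ, Q₁ i) + (ν (⋃ i ∈ {i : ι₁ | (ν (Q₁ i)).toReal = 0}, Q₁ i)
          + (ν (⋃ k ∈ G₂ᶜ, Q₂ k) + ν (⋃ p ∈ B3, Q₁ p.1 ∩ Q₂ p.2))) ≠ ⊤ :=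
        ENNReal.add_ne_top.2 ⟨measure_ne_top ν _, ENNReal.add_ne_top.2
          ⟨measure_ne_top ν _, ENNReal.add_ne_top.2
            ⟨measure_ne_top ν _, measure_ne_top ν _⟩⟩⟩
      have h := ENNReal.toReal_mono hne hstep
      rwa [ENNReal.toReal_add (measure_ne_top ν _) (ENNReal.add_ne_top.2
          ⟨measure_ne_top ν _, ENNReal.add_ne_top.2
            ⟨measure_ne_top ν _, measure_ne_top ν _⟩⟩),
        ENNReal.toReal_add (measure_ne_top ν _) (ENNReal.add_ne_top.2
          ⟨measure_ne_top ν _, measure_ne_top ν _⟩),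
        ENNReal.toReal_add (measure_ne_top ν _) (measure_ne_top ν _)] at h
    have hU0' : (ν (⋃ i ∈ {i : ι₁ | (ν (Q₁ i)).toReal = 0}, Q₁ i)).toReal = 0 := by
      rw [hU0]; simp
    have hone := (hQ₁.prod hQ₂).one_le_add ν GG
    linarith [hone, hbadtR, hU1, hU2, hU3, hU0', hε₁s, hε₂s, hs₂]
  · rintro ⟨i, k⟩ ⟨hi1, hm₁, hk2, hth⟩
    have h := peratom (ν := ν) hQ₁ hQ₂ hR₂ hs₁ hε₂' hm₁ (hG₂ k hk2) hth
    refine le_trans h ?_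
    linarith
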